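/- arXiv:0707.0785 — 8 statements merged into one kernel-verified Lean document; each statement's English description precedes it below -/
import Mathlib

section
/- Let M be a cancellative conical monoid in which any two elements admitting a common right multiple admit a right lcm. For a, b in M such that a ∨ b exists, define a\b as the unique element with a ∨ b = a(a\b). Then for a, b, c in M, (ab)\c exists if and only if b\(a\c) exists (meaning a\c exists and then b\(a\c) exists), and in that case (ab)\c = b\(a\c). -/
/-- `LDvd b a` : `b` left-divides `a`, i.e. `a = b * d` for some `d`. -/
def LDvd {M : Type*} [Monoid M] (b a : M) : Prop := ∃ d, a = b * d

/-- `c` is a right lcm of `a` and `b`. -/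
def IsRightLcm {M : Type*} [Monoid M] (a b c : M) : Prop :=
  LDvd a c ∧ LDvd b c ∧ ∀ m, LDvd a m → LDvd b m → LDvd c m

/-- `1` is the only invertible element. -/
def Conical (M : Type*) [Monoid M] : Prop := ∀ u : M, IsUnit u → u = 1

/-- Left and right cancellativity. -/
def Cancellative (M : Type*) [Monoid M] : Prop :=
  (∀ a b c : M, a * b = a * c → b = c) ∧ (∀ a b c : M, b * a = c * a → b = c)

/-- `IsRes a b r` : `r` is the residue `a \ b`, i.e. `a * r` is the right lcm `a ∨ b`. -/
def IsRes {M : Type*} [Monoid M] (a b r : M) : Prop := IsRightLcm a b (a * r)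

/-- The set of irreducible elements of `M`. -/
def Irr (M : Type*) [Monoid M] : Set M :=
  {a | a ≠ 1 ∧ ∀ b c : M, a = b * c → b = 1 ∨ c = 1}

/-- `a` is quasi-central: `aΣ = Σa` where `Σ` is the set of irreducible elements. -/
def QuasiCentral {M : Type*} [Monoid M] (a : M) : Prop :=
  (fun x => a * x) '' Irr M = (fun x => x * a) '' Irr M

/-- `g` is a left gcd of `a` and `b`. -/
def IsLeftGcd {M : Type*} [Monoid M] (a b g : M) : Prop :=
  LDvd g a ∧ LDvd g b ∧ ∀ d, LDvd d a → LDvd d b → LDvd d g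

/-- `j` is the join of `x` and `y` inside the lattice `↓(a)` of left divisors of `a`. -/
def IsJoinIn {M : Type*} [Monoid M] (a x y j : M) : Prop :=
  LDvd j a ∧ LDvd x j ∧ LDvd y j ∧ ∀ m, LDvd m a → LDvd x m → LDvd y m → LDvd j m

/-- A (left) divisibility monoid : cancellative, finitely generated by its irreducible
elements, any two elements admit a left gcd, and every `↓(a)` is a finite distributive
lattice under left divisibility (meets are left gcds, joins exist, distributivity holds). -/
structure IsDivisibilityMonoid (M : Type*) [Monoid M] : Prop where
  mul_left_cancel : ∀ a b c : M, a * b = a * c → b = c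
  mul_right_cancel : ∀ a b c : M, b * a = c * a → b = c
  irr_finite : (Irr M).Finite
  irr_gen : ∀ a : M, a ∈ Submonoid.closure (Irr M)
  exists_gcd : ∀ a b : M, ∃ g, IsLeftGcd a b g
  divisors_finite : ∀ a : M, {b : M | LDvd b a}.Finite
  exists_join : ∀ a x y : M, LDvd x a → LDvd y a → ∃ j, IsJoinIn a x y j
  distrib : ∀ a x y z : M, LDvd x a → LDvd y a → LDvd z a →
    ∀ jyz g gxy gxz j', IsJoinIn a y z jyz → IsLeftGcd x jyz g →
      IsLeftGcd x y gxy → IsLeftGcd x z gxz → IsJoinIn a gxy gxz j' → g = j'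

/-- `d` is the (right) local delta of `a`: the right lcm of the set `{b \ a : b ∈ M}`,
all of whose elements are required to exist. -/
def IsLocalDelta {M : Type*} [Monoid M] (a d : M) : Prop :=
  (∀ b : M, ∃ r, IsRes b a r) ∧
  (∀ b r : M, IsRes b a r → LDvd r d) ∧
  ∀ m : M, (∀ b r : M, IsRes b a r → LDvd r m) → LDvd d m

theorem stmt4 {M : Type*} [Monoid M] (hc : Cancellative M) (hcon : Conical M)
    (hlcm : ∀ a b : M, (∃ m, LDvd a m ∧ LDvd b m) → ∃ c, IsRightLcm a b c)
    (a b c : M) :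
    ((∃ r, IsRes (a * b) c r) ↔ ∃ s, IsRes a c s ∧ ∃ t, IsRes b s t) ∧
    (∀ s t, IsRes a c s → IsRes b s t → IsRes (a * b) c t) := by

  obtain ⟨hl, hr⟩ := hc
  have main : ∀ s t, IsRes a c s → IsRes b s t → IsRes (a * b) c t := by
    rintro s t ⟨⟨s', hs'⟩, ⟨d, hd⟩, hmin⟩ ⟨⟨t', ht'⟩, ⟨e, he⟩, hmin'⟩
    refine ⟨⟨t, rfl⟩, ⟨d * e, ?_⟩, ?_⟩
    · rw [mul_assoc a b t, he, ← mul_assoc, hd, mul_assoc]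
    · rintro m ⟨v, hv⟩ ⟨w, hw⟩
      obtain ⟨u, hu⟩ := hmin m ⟨b * v, by rw [hv, mul_assoc]⟩ ⟨w, hw⟩
      have hbv : b * v = s * u := hl a _ _ (by rw [← mul_assoc, ← mul_assoc, ← hu, ← hv])
      obtain ⟨p, hp⟩ := hmin' (s * u) ⟨v, hbv.symm⟩ ⟨u, rfl⟩
      exact ⟨p, by rw [hv, mul_assoc a b v, hbv, hp, ← mul_assoc, ← mul_assoc]⟩
  refine ⟨⟨?_, ?_⟩, main⟩
  · rintro ⟨r, ⟨r', hr'⟩, ⟨w, hw⟩, hmin⟩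
    obtain ⟨l, ⟨s, rfl⟩, hcl, hlmin⟩ :=
      hlcm a c ⟨a * b * r, ⟨b * r, by rw [mul_assoc]⟩, ⟨w, hw⟩⟩
    obtain ⟨u, hu⟩ := hlmin (a * b * r) ⟨b * r, by rw [mul_assoc]⟩ ⟨w, hw⟩
    have hbr : b * r = s * u := hl a _ _ (by rw [← mul_assoc, ← mul_assoc, ← hu])
    obtain ⟨l2, ⟨t, rfl⟩, hsl2, hl2min⟩ :=
      hlcm b s ⟨s * u, ⟨r, hbr.symm⟩, ⟨u, rfl⟩⟩
    exact ⟨s, ⟨⟨s, rfl⟩, hcl, hlmin⟩, t, ⟨t, rfl⟩, hsl2, hl2min⟩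
  · rintro ⟨s, hs, t, ht⟩
    exact ⟨t, main s t hs ht⟩
end

section
/- Let M be a cancellative conical monoid in which any two elements admitting a common right multiple admit a right lcm. For a, b, c in M, if a ∨ b exists, then c\(a ∨ b) exists if and only if both c\a and c\b exist and (c\a) ∨ (c\b) exists, and in that case c\(a ∨ b) = (c\a) ∨ (c\b). -/
theorem stmt5 {M : Type*} [Monoid M] (hc : Cancellative M) (hcon : Conical M)
    (hlcm : ∀ a b : M, (∃ m, LDvd a m ∧ LDvd b m) → ∃ c, IsRightLcm a b c)
    (a b c j : M) (hj : IsRightLcm a b j) :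
    ((∃ r, IsRes c j r) ↔ ∃ s t u, IsRes c a s ∧ IsRes c b t ∧ IsRightLcm s t u) ∧
    (∀ s t u, IsRes c a s → IsRes c b t → IsRightLcm s t u → IsRes c j u) := by
  obtain ⟨hca, _⟩ := hc
  obtain ⟨⟨x, hx⟩, ⟨y, hy⟩, hjmin⟩ := hj
  have part2 : ∀ s t u, IsRes c a s → IsRes c b t → IsRightLcm s t u → IsRes c j u := by
    intro s t u hs ht hu
    obtain ⟨_, ⟨p, hp⟩, hsmin⟩ := hs
    obtain ⟨_, ⟨q, hq⟩, htmin⟩ := ht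
    obtain ⟨⟨e, he⟩, ⟨f, hf⟩, humin⟩ := hu
    refine ⟨⟨u, rfl⟩, ?_, ?_⟩
    · apply hjmin
      · exact ⟨p * e, by rw [he, ← mul_assoc, hp, mul_assoc]⟩
      · exact ⟨q * f, by rw [hf, ← mul_assoc, hq, mul_assoc]⟩
    · rintro m ⟨w, hw⟩ ⟨k, hk⟩
      obtain ⟨p', hp'⟩ : LDvd (c * s) m := by
        refine hsmin m ⟨w, hw⟩ ⟨x * k, ?_⟩
        rw [hk, hx, mul_assoc]
      obtain ⟨q', hq'⟩ : LDvd (c * t) m := by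
        refine htmin m ⟨w, hw⟩ ⟨y * k, ?_⟩
        rw [hk, hy, mul_assoc]
      have hws : w = s * p' := hca c w (s * p') (by rw [← hw, hp', mul_assoc])
      have hwt : w = t * q' := hca c w (t * q') (by rw [← hw, hq', mul_assoc])
      obtain ⟨z, hz⟩ := humin w ⟨p', hws⟩ ⟨q', hwt⟩
      exact ⟨z, by rw [hw, hz, mul_assoc]⟩
  refine ⟨⟨?_, ?_⟩, part2⟩
  · rintro ⟨r, ⟨_, ⟨k, hk⟩, hrmin⟩⟩
    obtain ⟨ma, hma⟩ := hlcm c a ⟨c * r, ⟨r, rfl⟩, ⟨x * k, by rw [hk, hx, mul_assoc]⟩⟩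
    obtain ⟨s, rfl⟩ := hma.1
    obtain ⟨mb, hmb⟩ := hlcm c b ⟨c * r, ⟨r, rfl⟩, ⟨y * k, by rw [hk, hy, mul_assoc]⟩⟩
    obtain ⟨t, rfl⟩ := hmb.1
    obtain ⟨e, he⟩ := hma.2.2 (c * r) ⟨r, rfl⟩ ⟨x * k, by rw [hk, hx, mul_assoc]⟩
    obtain ⟨f, hf⟩ := hmb.2.2 (c * r) ⟨r, rfl⟩ ⟨y * k, by rw [hk, hy, mul_assoc]⟩
    have hrs : r = s * e := hca c r (s * e) (by rw [he, mul_assoc])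
    have hrt : r = t * f := hca c r (t * f) (by rw [hf, mul_assoc])
    obtain ⟨u, hu⟩ := hlcm s t ⟨r, ⟨e, hrs⟩, ⟨f, hrt⟩⟩
    exact ⟨s, t, u, hma, hmb, hu⟩
  · rintro ⟨s, t, u, hs, ht, hu⟩
    exact ⟨u, part2 s t u hs ht hu⟩
end

section
/- Let M be a cancellative monoid and a a quasi-central element of M. If a = bc, then b is quasi-central if and only if c is quasi-central. -/
lemma qc_mul_irr {M : Type*} [Monoid M] {a : M} (ha : QuasiCentral a)
    {x : M} (hx : x ∈ Irr M) : ∃ y ∈ Irr M, a * x = y * a := by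
  have hm : a * x ∈ (fun x => x * a) '' Irr M := by
    rw [← ha]; exact ⟨x, hx, rfl⟩
  obtain ⟨y, hy, hya⟩ := hm
  exact ⟨y, hy, hya.symm⟩

lemma qc_irr_mul {M : Type*} [Monoid M] {a : M} (ha : QuasiCentral a)
    {x : M} (hx : x ∈ Irr M) : ∃ y ∈ Irr M, x * a = a * y := by
  have hm : x * a ∈ (fun x => a * x) '' Irr M := by
    rw [ha]; exact ⟨x, hx, rfl⟩
  obtain ⟨y, hy, hya⟩ := hm
  exact ⟨y, hy, hya.symm⟩

theorem stmt7 {M : Type*} [Monoid M] (hc : Cancellative M)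
    (a b c : M) (ha : QuasiCentral a) (h : a = b * c) :
    (QuasiCentral b ↔ QuasiCentral c) := by
  obtain ⟨hlc, hrc⟩ := hc
  constructor
  · intro hb
    apply Set.Subset.antisymm
    · -- cΣ ⊆ Σc
      rintro _ ⟨x, hx, rfl⟩
      obtain ⟨y, hy, hya⟩ := qc_mul_irr ha hx
      obtain ⟨y', hy', hby⟩ := qc_irr_mul hb hy
      refine ⟨y', hy', ?_⟩
      show y' * c = c * x
      apply hlc b
      calc b * (y' * c) = (b * y') * c := by rw [mul_assoc]
        _ = (y * b) * c := by rw [← hby]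
        _ = y * a := by rw [mul_assoc, ← h]
        _ = a * x := hya.symm
        _ = b * (c * x) := by rw [h, mul_assoc]
    · -- Σc ⊆ cΣ
      rintro _ ⟨x, hx, rfl⟩
      obtain ⟨y, hy, hby⟩ := qc_mul_irr hb hx
      obtain ⟨y', hy', hya⟩ := qc_irr_mul ha hy
      refine ⟨y', hy', ?_⟩
      show c * y' = x * c
      apply hlc b
      calc b * (c * y') = a * y' := by rw [h, mul_assoc]
        _ = y * a := hya.symm
        _ = y * (b * c) := by rw [h]
        _ = (b * x) * c := by rw [← mul_assoc, ← hby]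
        _ = b * (x * c) := by rw [mul_assoc]
  · intro hcq
    apply Set.Subset.antisymm
    · -- bΣ ⊆ Σb
      rintro _ ⟨x, hx, rfl⟩
      obtain ⟨y, hy, hxc⟩ := qc_irr_mul hcq hx
      obtain ⟨y', hy', hay⟩ := qc_mul_irr ha hy
      refine ⟨y', hy', ?_⟩
      show y' * b = b * x
      apply hrc c
      calc (y' * b) * c = y' * a := by rw [mul_assoc, ← h]
        _ = a * y := hay.symm
        _ = b * (c * y) := by rw [h, mul_assoc]
        _ = b * (x * c) := by rw [← hxc]
        _ = (b * x) * c := by rw [mul_assoc]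
    · -- Σb ⊆ bΣ
      rintro _ ⟨x, hx, rfl⟩
      obtain ⟨y, hy, hxa⟩ := qc_irr_mul ha hx
      obtain ⟨y', hy', hcy⟩ := qc_mul_irr hcq hy
      refine ⟨y', hy', ?_⟩
      show b * y' = x * b
      apply hrc c
      calc (b * y') * c = b * (y' * c) := by rw [mul_assoc]
        _ = b * (c * y) := by rw [← hcy]
        _ = a * y := by rw [h, mul_assoc]
        _ = x * a := hxa.symm
        _ = (x * b) * c := by rw [h, mul_assoc]
end

section
/- Let M be a divisibility monoid and a an element of M. Then a admits a local delta (i.e., the set {b\a : b ∈ M} is well-defined and admits a right lcm) if and only if a ∨ b exists for every b in M. -/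
section DivMonoid

variable {M : Type*} [Monoid M]

theorem ldvd_refl (a : M) : LDvd a a := ⟨1, (mul_one a).symm⟩

theorem ldvd_trans {a b c : M} (h1 : LDvd a b) (h2 : LDvd b c) : LDvd a c := by
  obtain ⟨d, rfl⟩ := h1; obtain ⟨e, rfl⟩ := h2; exact ⟨d * e, mul_assoc a d e⟩

theorem one_ldvd (a : M) : LDvd 1 a := ⟨a, (one_mul a).symm⟩

theorem ldvd_mul (a b : M) : LDvd a (a * b) := ⟨b, rfl⟩

theorem ldvd_mul_left {a b : M} (c : M) (h : LDvd a b) : LDvd (c * a) (c * b) := by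
  obtain ⟨d, rfl⟩ := h; exact ⟨d, (mul_assoc c a d).symm⟩

theorem ldvd_mul_cancel (hM : IsDivisibilityMonoid M) {c a b : M}
    (h : LDvd (c * a) (c * b)) : LDvd a b := by
  obtain ⟨d, hd⟩ := h
  exact ⟨d, hM.mul_left_cancel c _ _ (by rw [← mul_assoc]; exact hd)⟩

/-- Units are trivial (follows from the `distrib` axiom). -/
theorem unit_eq_one (hM : IsDivisibilityMonoid M) {u : M} (hu : LDvd u 1) : u = 1 := by
  have hgu : IsLeftGcd (1 : M) 1 u := by
    refine ⟨hu, hu, fun d hd _ => ?_⟩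
    obtain ⟨e, he⟩ := hd
    exact ⟨e * u, by rw [← mul_assoc, ← he, one_mul]⟩
  have hJ : IsJoinIn (1 : M) 1 1 1 :=
    ⟨ldvd_refl 1, ldvd_refl 1, ldvd_refl 1, fun m _ h _ => one_ldvd m⟩
  have hg1 : IsLeftGcd (1 : M) 1 1 := ⟨ldvd_refl 1, ldvd_refl 1, fun d h _ => h⟩
  exact hM.distrib 1 1 1 1 (ldvd_refl 1) (ldvd_refl 1) (ldvd_refl 1)
    1 u 1 1 1 hJ hgu hg1 hg1 hJ

theorem ldvd_antisymm (hM : IsDivisibilityMonoid M) {x y : M}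
    (h1 : LDvd x y) (h2 : LDvd y x) : x = y := by
  obtain ⟨d, rfl⟩ := h1
  obtain ⟨e, he⟩ := h2
  have hde : d * e = 1 := by
    have : x * 1 = x * (d * e) := by rw [mul_one, ← mul_assoc, ← he]
    exact (hM.mul_left_cancel x 1 (d * e) this).symm
  have : d = 1 := unit_eq_one hM ⟨e, hde.symm⟩
  rw [this, mul_one]

theorem lcm_swap {a b c : M} (h : IsRightLcm a b c) : IsRightLcm b a c :=
  ⟨h.2.1, h.1, fun m hb ha => h.2.2 m ha hb⟩

theorem exists_res {a : M} (H : ∀ b : M, ∃ j, IsRightLcm a b j) (b : M) :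
    ∃ r, IsRes b a r := by
  obtain ⟨J, hJ⟩ := H b
  obtain ⟨r, hr⟩ := hJ.2.1
  exact ⟨r, by unfold IsRes; rw [← hr]; exact lcm_swap hJ⟩

/-- Transfer: if `a` has an lcm with everything, so does every residue of `a`. -/
theorem res_lcm (hM : IsDivisibilityMonoid M) {a b r : M}
    (H : ∀ b : M, ∃ j, IsRightLcm a b j) (hr : IsRes b a r) (x : M) :
    ∃ j, IsRightLcm r x j := by
  obtain ⟨J, hJ⟩ := H (b * x)
  have hbJ : LDvd b J := ldvd_trans (ldvd_mul b x) hJ.2.1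
  have hbrJ : LDvd (b * r) J := hr.2.2 J hbJ hJ.1
  obtain ⟨j', hj'⟩ := hbJ
  refine ⟨j', ?_, ?_, ?_⟩
  · exact ldvd_mul_cancel hM (b := j') (by rw [← hj']; exact hbrJ)
  · exact ldvd_mul_cancel hM (b := j') (by rw [← hj']; exact hJ.2.1)
  · intro m hrm hxm
    have haM : LDvd a (b * m) := ldvd_trans hr.2.1 (ldvd_mul_left b hrm)
    have hbxM : LDvd (b * x) (b * m) := ldvd_mul_left b hxm
    have hJm : LDvd J (b * m) := hJ.2.2 (b * m) haM hbxM
    exact ldvd_mul_cancel hM (a := j') (b := m) (by rw [← hj']; exact hJm)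

/-- Recovery lemma: if `A` is the right lcm of `a` and `b`, `b ∣ x ∣ A`, and
`g = gcd(a, x)`, then `x` is the right lcm of `b` and `g`.  Uses distributivity. -/
theorem recovery (hM : IsDivisibilityMonoid M) {a b A x g : M}
    (hA : IsRightLcm a b A) (hbx : LDvd b x) (hxA : LDvd x A)
    (hg : IsLeftGcd a x g) : IsRightLcm b g x := by
  have haA : LDvd a A := hA.1
  have hbA : LDvd b A := hA.2.1
  have jyzA : IsJoinIn A a b A :=
    ⟨ldvd_refl A, haA, hbA, fun m _ ham hbm => hA.2.2 m ham hbm⟩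
  have gxA : IsLeftGcd x A x := ⟨ldvd_refl x, hxA, fun d h _ => h⟩
  have gxa : IsLeftGcd x a g := ⟨hg.2.1, hg.1, fun d h1 h2 => hg.2.2 d h2 h1⟩
  have gxb : IsLeftGcd x b b := ⟨hbx, ldvd_refl b, fun d _ h => h⟩
  obtain ⟨j', hj'⟩ := hM.exists_join A g b (ldvd_trans hg.2.1 hxA) hbA
  have key : x = j' := hM.distrib A x a b hxA haA hbA A x g b j' jyzA gxA gxa gxb hj'
  refine ⟨hbx, hg.2.1, fun m hbm hgm => ?_⟩
  obtain ⟨h, hh⟩ := hM.exists_gcd x m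
  have hbh : LDvd b h := hh.2.2 b hbx hbm
  have hgh : LDvd g h := hh.2.2 g hg.2.1 hgm
  have hhA : LDvd h A := ldvd_trans hh.1 hxA
  have : LDvd j' h := hj'.2.2.2 h hhA hgh hbh
  exact ldvd_trans (key ▸ this) hh.2.1

/-- Number of left divisors. -/
noncomputable def nD (hM : IsDivisibilityMonoid M) (x : M) : ℕ :=
  (hM.divisors_finite x).toFinset.card

/-- Residues of `a` have at most as many divisors as `a`. -/
theorem nD_res_le (hM : IsDivisibilityMonoid M) {a b r : M} (hr : IsRes b a r) :
    nD hM r ≤ nD hM a := by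
  classical
  have hA : IsRightLcm a b (b * r) := lcm_swap hr
  set φ : M → M := fun s => Classical.choose (hM.exists_gcd a (b * s)) with hφ
  have hspec : ∀ s, IsLeftGcd a (b * s) (φ s) :=
    fun s => Classical.choose_spec (hM.exists_gcd a (b * s))
  refine Finset.card_le_card_of_injOn φ ?_ ?_
  · intro s hs
    simp only [Finset.mem_coe, Set.Finite.mem_toFinset, Set.mem_setOf_eq] at hs ⊢
    exact (hspec s).1
  · intro s₁ hs₁ s₂ hs₂ heq
    simp only [Finset.mem_coe, Set.Finite.mem_toFinset, Set.mem_setOf_eq] at hs₁ hs₂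
    have h₁ : IsRightLcm b (φ s₁) (b * s₁) :=
      recovery hM hA (ldvd_mul b s₁) (ldvd_mul_left b hs₁) (hspec s₁)
    have h₂ : IsRightLcm b (φ s₁) (b * s₂) := by
      rw [heq]
      exact recovery hM hA (ldvd_mul b s₂) (ldvd_mul_left b hs₂) (hspec s₂)
    have : b * s₁ = b * s₂ :=
      ldvd_antisymm hM (h₁.2.2 (b * s₂) h₂.1 h₂.2.1) (h₂.2.2 (b * s₁) h₁.1 h₁.2.1)
    exact hM.mul_left_cancel b s₁ s₂ this

theorem nD_lt (hM : IsDivisibilityMonoid M) {u : M} {v : M} (hv : v ≠ 1) :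
    nD hM u < nD hM (u * v) := by
  classical
  apply Finset.card_lt_card
  rw [Finset.ssubset_iff_of_subset]
  · refine ⟨u * v, ?_, ?_⟩
    · simp only [Set.Finite.mem_toFinset, Set.mem_setOf_eq]
      exact ldvd_refl _
    · simp only [Set.Finite.mem_toFinset, Set.mem_setOf_eq]
      intro hdvd
      have : u * v = u := ldvd_antisymm hM hdvd (ldvd_mul u v)
      exact hv (hM.mul_left_cancel u v 1 (by rw [this, mul_one]))
  · intro d hd
    simp only [Set.Finite.mem_toFinset, Set.mem_setOf_eq] at *
    exact ldvd_trans hd (ldvd_mul u v)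

theorem nD_list (hM : IsDivisibilityMonoid M) :
    ∀ l : List M, (∀ p ∈ l, p ∈ Irr M) → ∀ u : M,
      nD hM u + l.length ≤ nD hM (u * l.prod) := by
  intro l
  induction l with
  | nil => intro _ u; simp [mul_one]
  | cons p t ih =>
      intro hl u
      have hp : p ∈ Irr M := hl p (by simp)
      have hne : p ≠ 1 := hp.1
      have h1 : nD hM u < nD hM (u * p) := nD_lt hM hne
      have h2 : nD hM (u * p) + t.length ≤ nD hM ((u * p) * t.prod) :=
        ih (fun q hq => hl q (by simp [hq])) (u * p)
      calc nD hM u + (p :: t).length = (nD hM u + 1) + t.length := by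
            simp [List.length_cons]; ring
        _ ≤ nD hM (u * p) + t.length := by omega
        _ ≤ nD hM ((u * p) * t.prod) := h2
        _ = nD hM (u * (p :: t).prod) := by rw [List.prod_cons, mul_assoc]

theorem length_lt_nD (hM : IsDivisibilityMonoid M) {l : List M} {x : M}
    (hl : ∀ p ∈ l, p ∈ Irr M) (hx : x = l.prod) : l.length < nD hM x := by
  have h := nD_list hM l hl 1
  rw [one_mul, ← hx] at h
  have h1 : 0 < nD hM (1 : M) := Finset.card_pos.mpr
    ⟨1, by simp only [Set.Finite.mem_toFinset, Set.mem_setOf_eq]; exact ldvd_refl 1⟩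
  omega

theorem bounded_prod_finite (hM : IsDivisibilityMonoid M) (n : ℕ) :
    {x : M | ∃ l : List M, (∀ p ∈ l, p ∈ Irr M) ∧ l.length ≤ n ∧ x = l.prod}.Finite := by
  induction n with
  | zero =>
      apply Set.Finite.subset (Set.finite_singleton (1 : M))
      rintro x ⟨l, _, hlen, rfl⟩
      have : l = [] := List.length_eq_zero_iff.mp (Nat.le_zero.mp hlen)
      simp [this]
  | succ n ih =>
      apply Set.Finite.subset
        (Set.Finite.union ih
          (Set.Finite.biUnion hM.irr_finite
            (fun p _ => ih.image (fun x => p * x))))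
      rintro x ⟨l, hl, hlen, rfl⟩
      cases l with
      | nil => exact Or.inl ⟨[], by simp⟩
      | cons p t =>
          right
          refine Set.mem_biUnion (hl p (by simp)) ?_
          refine ⟨t.prod, ⟨t, fun q hq => hl q (by simp [hq]), ?_, rfl⟩, ?_⟩
          · simpa [List.length_cons] using hlen
          · simp [List.prod_cons]

theorem residues_finite (hM : IsDivisibilityMonoid M) (a : M) :
    {r : M | ∃ b, IsRes b a r}.Finite := by
  apply Set.Finite.subset (bounded_prod_finite hM (nD hM a))
  rintro r ⟨b, hb⟩
  obtain ⟨l, hl, hprod⟩ := Submonoid.exists_list_of_mem_closure (hM.irr_gen r)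
  have h1 : l.length < nD hM r := length_lt_nD hM hl hprod.symm
  have h2 : nD hM r ≤ nD hM a := nD_res_le hM hb
  exact ⟨l, hl, by omega, hprod.symm⟩

theorem lcm_of_residue_subset (hM : IsDivisibilityMonoid M) {a : M}
    (H : ∀ b : M, ∃ j, IsRightLcm a b j) (T : Set M) (hT : T.Finite) :
    T ⊆ {r : M | ∃ b, IsRes b a r} →
      ∃ d, (∀ r ∈ T, LDvd r d) ∧ ∀ m, (∀ r ∈ T, LDvd r m) → LDvd d m := by
  refine Set.Finite.induction_on (motive := fun T _ => T ⊆ {r : M | ∃ b, IsRes b a r} →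
      ∃ d, (∀ r ∈ T, LDvd r d) ∧ ∀ m, (∀ r ∈ T, LDvd r m) → LDvd d m) T hT
    (fun _ => ⟨1, fun r hr => absurd hr (Set.notMem_empty r), fun m _ => one_ldvd m⟩) ?_
  intro r T hrT hTfin ih hsub
  ·
      obtain ⟨d', hd'⟩ := ih (fun x hx => hsub (Set.mem_insert_of_mem r hx))
      obtain ⟨b, hb⟩ := hsub (Set.mem_insert r T)
      obtain ⟨d, hd⟩ := res_lcm hM H hb d'
      refine ⟨d, ?_, ?_⟩
      · rintro r' (rfl | hr')
        · exact hd.1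
        · exact ldvd_trans (hd'.1 r' hr') hd.2.1
      · intro m hm
        exact hd.2.2 m (hm r (Set.mem_insert r T))
          (hd'.2 m fun r' hr' => hm r' (Set.mem_insert_of_mem r hr'))

end DivMonoid

theorem stmt10 {M : Type*} [Monoid M] (hM : IsDivisibilityMonoid M) (a : M) :
    (∃ d, IsLocalDelta a d) ↔ ∀ b : M, ∃ j, IsRightLcm a b j := by
  constructor
  · rintro ⟨d, hd⟩ b
    obtain ⟨r, hr⟩ := hd.1 b
    exact ⟨b * r, lcm_swap hr⟩
  · intro H
    obtain ⟨d, hd⟩ := lcm_of_residue_subset hM H {r : M | ∃ b, IsRes b a r}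
      (residues_finite hM a) (fun x hx => hx)
    refine ⟨d, exists_res H, fun b r hr => hd.1 r ⟨b, hr⟩, fun m hm => ?_⟩
    exact hd.2 m fun r hr => by obtain ⟨b, hb⟩ := hr; exact hm b r hb
end

section
/- Let M be a divisibility monoid, a an element of M, and b a quasi-central element of M. If a divides b (b = cad for some c, d), then the local delta Δ_R(a) exists and left-divides b. -/
private theorem LDvd.trans' {M : Type*} [Monoid M] {x y z : M} (h1 : LDvd x y) (h2 : LDvd y z) :
    LDvd x z := by
  obtain ⟨e, he⟩ := h1; obtain ⟨f, hf⟩ := h2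
  exact ⟨e * f, by rw [hf, he, mul_assoc]⟩

private theorem LDvd.refl' {M : Type*} [Monoid M] (x : M) : LDvd x x := ⟨1, (mul_one x).symm⟩

private theorem ldvd_mul_s12 {M : Type*} [Monoid M] (x y : M) : LDvd x (x * y) := ⟨y, rfl⟩

/-- A quasi-central element satisfies `Mb ⊆ bM`. -/
private theorem qc_swap {M : Type*} [Monoid M] {b : M} (hb : QuasiCentral b)
    (hgen : ∀ a : M, a ∈ Submonoid.closure (Irr M)) (x : M) : ∃ x', x * b = b * x' := by
  have key : ∀ x ∈ Submonoid.closure (Irr M), ∃ x', x * b = b * x' := by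
    intro x hx
    induction hx using Submonoid.closure_induction with
    | mem σ hσ =>
        have hm : σ * b ∈ (fun x => x * b) '' Irr M := ⟨σ, hσ, rfl⟩
        rw [← hb] at hm
        obtain ⟨σ', _, hσ'⟩ := hm
        exact ⟨σ', hσ'.symm⟩
    | one => exact ⟨1, by simp⟩
    | mul x y _ _ hx' hy' =>
        obtain ⟨x', hx'⟩ := hx'; obtain ⟨y', hy'⟩ := hy'
        exact ⟨x' * y', by rw [mul_assoc, hy', ← mul_assoc, hx', mul_assoc]⟩
  exact key x (hgen x)

/-- A join in some `↓(n)` is a genuine right lcm (gcd trick). -/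
private theorem join_isRightLcm {M : Type*} [Monoid M] (hM : IsDivisibilityMonoid M)
    {n x y j : M} (hj : IsJoinIn n x y j) : IsRightLcm x y j := by
  obtain ⟨hjn, hxj, hyj, huniv⟩ := hj
  refine ⟨hxj, hyj, fun m hxm hym => ?_⟩
  obtain ⟨g, hgj, hgm, hgu⟩ := hM.exists_gcd j m
  exact LDvd.trans' (huniv g (LDvd.trans' hgj hjn) (hgu x hxj hxm) (hgu y hyj hym)) hgm

/-- Finite sets of left divisors of `b` admit a join in `↓(b)`. -/
private theorem finite_join {M : Type*} [Monoid M] (hM : IsDivisibilityMonoid M)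
    (b : M) (S : Set M) (hfin : S.Finite) (hsub : ∀ s ∈ S, LDvd s b) :
    ∃ j, LDvd j b ∧ (∀ s ∈ S, LDvd s j) ∧
      ∀ m, LDvd m b → (∀ s ∈ S, LDvd s m) → LDvd j m := by
  revert hsub
  refine Set.Finite.induction_on (motive := fun S _ => (∀ s ∈ S, LDvd s b) →
    ∃ j, LDvd j b ∧ (∀ s ∈ S, LDvd s j) ∧
      ∀ m, LDvd m b → (∀ s ∈ S, LDvd s m) → LDvd j m) S hfin ?_ ?_
  · exact fun _ => ⟨1, ⟨b, (one_mul b).symm⟩, fun s hs => hs.elim,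
      fun m _ _ => ⟨m, (one_mul m).symm⟩⟩
  · intro s S hsS hSfin ih hsub
    obtain ⟨j, hjb, hup, huniv⟩ := ih (fun t ht => hsub t (Set.mem_insert_of_mem s ht))
    obtain ⟨j₂, hj₂b, hsj₂, hjj₂, hj₂u⟩ :=
      hM.exists_join b s j (hsub s (Set.mem_insert s S)) hjb
    refine ⟨j₂, hj₂b, ?_, ?_⟩
    · intro t ht
      rcases Set.mem_insert_iff.mp ht with h1 | h2
      · exact h1 ▸ hsj₂
      · exact LDvd.trans' (hup t h2) hjj₂
    · intro m hmb hall
      exact hj₂u m hmb (hall s (Set.mem_insert s S))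
        (huniv m hmb (fun t ht => hall t (Set.mem_insert_of_mem s ht)))

theorem stmt12 {M : Type*} [Monoid M] (hM : IsDivisibilityMonoid M)
    (a b : M) (hb : QuasiCentral b) (h : ∃ c d, b = c * a * d) :
    ∃ D, IsLocalDelta a D ∧ LDvd D b := by

  obtain ⟨c₀, d₀, hbd⟩ := h
  -- Step 1: for every c, `c * b` is a common right multiple of `c` and `a`.
  have hcm : ∀ c : M, LDvd a (c * b) := by
    intro c
    obtain ⟨e, he⟩ := qc_swap hb hM.irr_gen (c₀ * c)
    have : c₀ * (c * b) = c₀ * (a * (d₀ * e)) := by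
      have h1 : c₀ * c * b = c₀ * a * d₀ * e := by rw [he, hbd]
      rw [← mul_assoc, h1, mul_assoc, mul_assoc]
    exact ⟨d₀ * e, hM.mul_left_cancel _ _ _ this⟩
  -- Step 2: residues exist.
  have hres : ∀ c : M, ∃ r, IsRes c a r := by
    intro c
    obtain ⟨j, hj⟩ := hM.exists_join (c * b) c a (ldvd_mul_s12 c b) (hcm c)
    obtain ⟨r, hr⟩ := hj.2.1
    refine ⟨r, ?_⟩
    unfold IsRes
    rw [← hr]
    exact join_isRightLcm hM hj
  -- Step 3: every residue left-divides `b`.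
  have hresb : ∀ c r : M, IsRes c a r → LDvd r b := by
    intro c r hr
    obtain ⟨e, he⟩ := hr.2.2 (c * b) (ldvd_mul_s12 c b) (hcm c)
    exact ⟨e, hM.mul_left_cancel c _ _ (by rw [← mul_assoc, ← he])⟩
  -- Step 4: the set of residues is a finite set of divisors of `b`.
  set S : Set M := {r | ∃ c, IsRes c a r} with hS
  have hSsub : ∀ s ∈ S, LDvd s b := fun s hs => by
    obtain ⟨c, hc⟩ := hs; exact hresb c s hc
  have hSfin : S.Finite :=
    Set.Finite.subset (hM.divisors_finite b) (fun s hs => hSsub s hs)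
  obtain ⟨D, hDb, hDup, hDuniv⟩ := finite_join hM b S hSfin hSsub
  refine ⟨D, ⟨hres, fun c r hr => hDup r ⟨c, hr⟩, ?_⟩, hDb⟩
  -- Step 5: universal property of the local delta, via the gcd trick.
  intro m hm
  obtain ⟨g, hgD, hgm, hgu⟩ := hM.exists_gcd D m
  refine LDvd.trans' (hDuniv g (LDvd.trans' hgD hDb) ?_) hgm
  intro s hs
  obtain ⟨c, hc⟩ := hs
  exact hgu s (hDup s ⟨c, hc⟩) (hm c s hc)
end

section
/- Let M be a divisibility monoid. Every quasi-central element a of M satisfies Δ_R(a) = a (in particular Δ_R(a) exists). -/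
theorem stmt13 {M : Type*} [Monoid M] (hM : IsDivisibilityMonoid M)
    (a : M) (ha : QuasiCentral a) : IsLocalDelta a a := by
  have ldvd_trans : ∀ {x y z : M}, LDvd x y → LDvd y z → LDvd x z := by
    rintro x y z ⟨d1, rfl⟩ ⟨d2, rfl⟩
    exact ⟨d1 * d2, mul_assoc _ _ _⟩
  have push : ∀ b : M, ∃ b', b * a = a * b' := by
    intro b
    induction hM.irr_gen b using Submonoid.closure_induction with
    | mem s hs =>
        have hmem : s * a ∈ (fun x => x * a) '' Irr M := ⟨s, hs, rfl⟩
        rw [← ha] at hmem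
        obtain ⟨s', _, h⟩ := hmem
        exact ⟨s', h.symm⟩
    | one => exact ⟨1, by simp⟩
    | mul x y _ _ ihx ihy =>
        obtain ⟨x', hx⟩ := ihx
        obtain ⟨y', hy⟩ := ihy
        exact ⟨x' * y', by rw [mul_assoc, hy, ← mul_assoc, hx, mul_assoc]⟩
  refine ⟨?_, ?_, ?_⟩
  · intro b
    obtain ⟨b', hb'⟩ := push b
    have hbc : LDvd b (b * a) := ⟨a, rfl⟩
    have hac : LDvd a (b * a) := ⟨b', hb'⟩
    obtain ⟨j, hjc, ⟨r, hr⟩, hja, hmax⟩ := hM.exists_join (b * a) b a hbc hac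
    refine ⟨r, ?_⟩
    unfold IsRes
    rw [← hr]
    refine ⟨⟨r, hr⟩, hja, ?_⟩
    intro m hbm ham
    obtain ⟨g, hg1, hg2, hg3⟩ := hM.exists_gcd (b * a) m
    exact ldvd_trans (hmax g hg1 (hg3 b hbc hbm) (hg3 a hac ham)) hg2
  · intro b r hr
    obtain ⟨b', hb'⟩ := push b
    obtain ⟨u, hu⟩ := hr.2.2 (b * a) ⟨a, rfl⟩ ⟨b', hb'⟩
    rw [mul_assoc] at hu
    exact ⟨u, hM.mul_left_cancel b a (r * u) hu⟩
  · intro m hm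
    refine hm 1 a ⟨⟨1 * a, (one_mul _).symm⟩, ⟨1, by simp⟩, ?_⟩
    intro m' _ ham'
    rw [one_mul]
    exact ham'
end

section
/- Let M be a divisibility monoid. Every element a of M satisfying Δ_R(a) = a is quasi-central. -/
namespace Stmt14Aux

variable {M : Type*} [Monoid M]

theorem ldvd_refl (a : M) : LDvd a a := ⟨1, (mul_one a).symm⟩

theorem ldvd_trans {a b c : M} (h1 : LDvd a b) (h2 : LDvd b c) : LDvd a c := by
  obtain ⟨d, rfl⟩ := h1
  obtain ⟨e, rfl⟩ := h2
  exact ⟨d * e, mul_assoc _ _ _⟩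

theorem one_ldvd (a : M) : LDvd 1 a := ⟨a, (one_mul a).symm⟩

theorem ldvd_mul (a b : M) : LDvd a (a * b) := ⟨b, rfl⟩

variable (hM : IsDivisibilityMonoid M)
include hM

theorem conical : Conical M := by
  intro u hu
  obtain ⟨v, hv⟩ := hu.exists_right_inv
  have h1 : LDvd u 1 := ⟨v, hv.symm⟩
  have hgcd : IsLeftGcd (1 : M) 1 u := by
    refine ⟨h1, h1, fun d hd _ => ?_⟩
    obtain ⟨e, he⟩ := hd
    exact ⟨e * u, by rw [← mul_assoc, ← he, one_mul]⟩
  have hgcd1 : IsLeftGcd (1 : M) 1 (1 : M) :=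
    ⟨ldvd_refl 1, ldvd_refl 1, fun d hd _ => hd⟩
  have hjoin : IsJoinIn (1 : M) 1 1 1 :=
    ⟨ldvd_refl 1, ldvd_refl 1, ldvd_refl 1, fun m _ _ _ => one_ldvd m⟩
  exact hM.distrib 1 1 1 1 (ldvd_refl 1) (ldvd_refl 1) (ldvd_refl 1) 1 u 1 1 1
    hjoin hgcd hgcd1 hgcd1 hjoin

theorem eq_one_of_mul_eq_one {d e : M} (h : d * e = 1) : d = 1 := by
  have hed : e * d = 1 := by
    have h1 : d * (e * d) = d * 1 := by
      rw [← mul_assoc, h, one_mul, mul_one]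
    exact hM.mul_left_cancel _ _ _ h1
  exact conical hM d ⟨⟨d, e, h, hed⟩, rfl⟩

theorem ldvd_antisymm {a b : M} (h1 : LDvd a b) (h2 : LDvd b a) : a = b := by
  obtain ⟨d, hd⟩ := h1
  obtain ⟨e, he⟩ := h2
  have h3 : a * 1 = a * (d * e) := by
    rw [mul_one]
    rw [hd] at he
    rw [mul_assoc] at he
    exact he
  have hd1 : d = 1 := eq_one_of_mul_eq_one hM (hM.mul_left_cancel _ _ _ h3).symm
  rw [hd, hd1, mul_one]

theorem join_unique {a x y j j' : M} (h : IsJoinIn a x y j) (h' : IsJoinIn a x y j') :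
    j = j' :=
  ldvd_antisymm hM (h.2.2.2 j' h'.1 h'.2.1 h'.2.2.1) (h'.2.2.2 j h.1 h.2.1 h.2.2.1)

omit hM in
theorem irr_divisor {p d : M} (hp : p ∈ Irr M) (hd : LDvd d p) : d = 1 ∨ d = p := by
  obtain ⟨e, he⟩ := hd
  rcases hp.2 d e he with h | h
  · exact Or.inl h
  · right
    rw [he, h, mul_one]

/-- The key interval lemma: the join of two distinct irreducibles `p, q` (inside `↓ w`)
has the form `p * q'` with `q'` irreducible. -/
theorem join_right_factor {p q w : M} (hp : p ∈ Irr M) (hq : q ∈ Irr M) (hpq : p ≠ q)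
    (hpw : LDvd p w) (hqw : LDvd q w) :
    ∃ j q', IsJoinIn w p q j ∧ j = p * q' ∧ q' ∈ Irr M := by
  obtain ⟨j, hj⟩ := hM.exists_join w p q hpw hqw
  obtain ⟨q', hjq'⟩ := hj.2.1
  have interval : ∀ m, LDvd p m → LDvd m j → m = p ∨ m = j := by
    intro m hpm hmj
    have hmw : LDvd m w := ldvd_trans hmj hj.1
    obtain ⟨g, hg⟩ := hM.exists_gcd m q
    rcases irr_divisor hq hg.2.1 with hg1 | hgq
    · left
      obtain ⟨G, hG⟩ := hM.exists_gcd m p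
      have hGw : LDvd G w := ldvd_trans hG.1 hmw
      have hgx : IsLeftGcd m j m := ⟨ldvd_refl m, hmj, fun d hd _ => hd⟩
      have hgz : IsLeftGcd m q 1 := by
        refine ⟨one_ldvd m, one_ldvd q, fun d h1 h2 => ?_⟩
        have := hg.2.2 d h1 h2
        rwa [hg1] at this
      have hjoinG : IsJoinIn w G 1 G :=
        ⟨hGw, ldvd_refl G, one_ldvd G, fun m' _ h _ => h⟩
      have hmG : m = G := hM.distrib w m p q hmw hpw hqw j m G 1 G hj hgx hG hgz hjoinG
      have hmp : LDvd m p := by rw [hmG]; exact hG.2.1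
      exact ldvd_antisymm hM hmp hpm
    · right
      have hqm : LDvd q m := by rw [← hgq]; exact hg.1
      exact ldvd_antisymm hM hmj (hj.2.2.2 m hmw hpm hqm)
  have hq'ne : q' ≠ 1 := by
    intro h
    rw [h, mul_one] at hjq'
    have hqp : LDvd q p := by rw [← hjq']; exact hj.2.2.1
    rcases irr_divisor hp hqp with h1 | h2
    · exact hq.1 h1
    · exact hpq h2.symm
  refine ⟨j, q', hj, hjq', hq'ne, ?_⟩
  intro u v huv
  by_cases hu : u = 1
  · exact Or.inl hu
  · right
    have h1 : LDvd p (p * u) := ⟨u, rfl⟩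
    have h2 : LDvd (p * u) j := ⟨v, by rw [hjq', huv, mul_assoc]⟩
    rcases interval (p * u) h1 h2 with h3 | h3
    · exact absurd (hM.mul_left_cancel p u 1 (by rw [mul_one]; exact h3)) hu
    · have hu' : u = q' := hM.mul_left_cancel p u q' (by rw [h3, hjq'])
      exact hM.mul_left_cancel u v 1 (by rw [mul_one, ← huv]; exact hu'.symm)

theorem exists_irrList (a : M) :
    ∃ l : List M, (∀ p ∈ l, p ∈ Irr M) ∧ l.prod = a := by
  have h := hM.irr_gen a
  induction h using Submonoid.closure_induction with
  | mem x hx => exact ⟨[x], by simpa using hx, by simp⟩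
  | one => exact ⟨[], by simp, by simp⟩
  | mul x y hx hy ihx ihy =>
    obtain ⟨l1, hl1, hp1⟩ := ihx
    obtain ⟨l2, hl2, hp2⟩ := ihy
    refine ⟨l1 ++ l2, ?_, by rw [List.prod_append, hp1, hp2]⟩
    intro p hp
    rcases List.mem_append.mp hp with h | h
    · exact hl1 p h
    · exact hl2 p h

theorem eq_nil_of_prod_eq_one {l : List M} (hl : ∀ p ∈ l, p ∈ Irr M)
    (h : l.prod = 1) : l = [] := by
  cases l with
  | nil => rfl
  | cons q t =>
    exfalso
    have hq := hl q (List.mem_cons_self : q ∈ q :: t)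
    rw [List.prod_cons] at h
    exact hq.1 (eq_one_of_mul_eq_one hM h)

theorem length_invariant : ∀ n (l₁ l₂ : List M), l₁.length ≤ n →
    (∀ p ∈ l₁, p ∈ Irr M) → (∀ p ∈ l₂, p ∈ Irr M) → l₁.prod = l₂.prod →
    l₂.length = l₁.length := by
  intro n
  induction n with
  | zero =>
    intro l₁ l₂ hlen h1 h2 hp
    have e1 : l₁ = [] := List.length_eq_zero_iff.mp (Nat.le_zero.mp hlen)
    subst e1
    have e2 : l₂ = [] := eq_nil_of_prod_eq_one hM h2 (by rw [← hp]; rfl)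
    rw [e2]
  | succ n ih =>
    intro l₁ l₂ hlen h1 h2 hp
    cases l₁ with
    | nil =>
      have e2 : l₂ = [] := eq_nil_of_prod_eq_one hM h2 (by rw [← hp]; rfl)
      rw [e2]
    | cons p l =>
      cases l₂ with
      | nil =>
        have e1 : p :: l = [] := eq_nil_of_prod_eq_one hM h1 (by rw [hp]; rfl)
        exact absurd e1 (List.cons_ne_nil p l)
      | cons q l' =>
        have hpirr : p ∈ Irr M := h1 p (List.mem_cons_self : p ∈ p :: l)
        have hqirr : q ∈ Irr M := h2 q (List.mem_cons_self : q ∈ q :: l')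
        have hlirr : ∀ x ∈ l, x ∈ Irr M := fun x hx => h1 x (List.mem_cons_of_mem p hx)
        have hl'irr : ∀ x ∈ l', x ∈ Irr M := fun x hx => h2 x (List.mem_cons_of_mem q hx)
        have hlen' : l.length ≤ n := Nat.le_of_succ_le_succ hlen
        rw [List.prod_cons, List.prod_cons] at hp
        by_cases hpq : p = q
        · subst hpq
          have hll' : l.prod = l'.prod := hM.mul_left_cancel p _ _ hp
          have := ih l l' hlen' hlirr hl'irr hll'
          simp [this]
        · have hpw : LDvd p (p * l.prod) := ⟨l.prod, rfl⟩
          have hqw : LDvd q (p * l.prod) := ⟨l'.prod, hp⟩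
          obtain ⟨j, q', hj, hjq', hq'⟩ := join_right_factor hM hpirr hqirr hpq hpw hqw
          obtain ⟨j₂, p', hj₂, hjp', hp'⟩ :=
            join_right_factor hM hqirr hpirr (Ne.symm hpq) hqw hpw
          have hjs : IsJoinIn (p * l.prod) q p j :=
            ⟨hj.1, hj.2.2.1, hj.2.1, fun m h1 h2 h3 => hj.2.2.2 m h1 h3 h2⟩
          have hjj : j₂ = j := join_unique hM hj₂ hjs
          obtain ⟨z, hz⟩ := hj.1
          obtain ⟨lz, hlz, hlzp⟩ := exists_irrList hM z
          -- l.prod = q' * z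
          have e1 : l.prod = q' * z := by
            have : p * l.prod = p * (q' * z) := by
              rw [hz, hjq', mul_assoc]
            exact hM.mul_left_cancel _ _ _ this
          -- l'.prod = p' * z
          have e2 : l'.prod = p' * z := by
            have : q * l'.prod = q * (p' * z) := by
              rw [← hp, hz, ← hjj, hjp', mul_assoc]
            exact hM.mul_left_cancel _ _ _ this
          have ihA : (q' :: lz).length = l.length := by
            refine ih l (q' :: lz) hlen' hlirr ?_ ?_
            · intro x hx
              rcases List.mem_cons.mp hx with h | h
              · rw [h]; exact hq'
              · exact hlz x h
            · rw [List.prod_cons, hlzp, e1]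
          have hlzlen : lz.length + 1 = l.length := by simpa using ihA
          have ihB : l'.length = (p' :: lz).length := by
            refine ih (p' :: lz) l' ?_ ?_ hl'irr ?_
            · simp only [List.length_cons]
              omega
            · intro x hx
              rcases List.mem_cons.mp hx with h | h
              · rw [h]; exact hp'
              · exact hlz x h
            · rw [List.prod_cons, hlzp, e2]
          simp only [List.length_cons] at *
          omega

noncomputable def len (a : M) : ℕ := (exists_irrList hM a).choose.length

theorem len_eq {a : M} {l : List M} (hl : ∀ p ∈ l, p ∈ Irr M) (h : l.prod = a) :
    l.length = len hM a := by
  obtain ⟨hirr, hprod⟩ := (exists_irrList hM a).choose_spec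
  exact length_invariant hM (exists_irrList hM a).choose.length
    (exists_irrList hM a).choose l (le_refl _) hirr hl (by rw [hprod, h])

theorem len_mul (a b : M) : len hM (a * b) = len hM a + len hM b := by
  obtain ⟨ha1, ha2⟩ := (exists_irrList hM a).choose_spec
  obtain ⟨hb1, hb2⟩ := (exists_irrList hM b).choose_spec
  have h : ((exists_irrList hM a).choose ++ (exists_irrList hM b).choose).length
      = len hM (a * b) := by
    refine len_eq hM ?_ ?_
    · intro p hp
      rcases List.mem_append.mp hp with h | h
      · exact ha1 p h
      · exact hb1 p h
    · rw [List.prod_append, ha2, hb2]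
  rw [← h, List.length_append]
  rfl

theorem len_irr {a : M} (ha : a ∈ Irr M) : len hM a = 1 := by
  have hl : ∀ p ∈ [a], p ∈ Irr M := by
    intro p hp
    rw [List.mem_singleton.mp hp]
    exact ha
  have h := len_eq hM (a := a) (l := [a]) hl (by simp)
  simpa using h.symm

theorem irr_of_len_one {a : M} (ha : len hM a = 1) : a ∈ Irr M := by
  obtain ⟨h1, h2⟩ := (exists_irrList hM a).choose_spec
  obtain ⟨x, hx⟩ := List.length_eq_one_iff.mp ha
  have hxa : x = a := by
    rw [← h2, hx, List.prod_cons, List.prod_nil, mul_one]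
  rw [← hxa]
  exact h1 x (by rw [hx]; exact (List.mem_cons_self : x ∈ [x]))

end Stmt14Aux

theorem stmt14 {M : Type*} [Monoid M] (hM : IsDivisibilityMonoid M)
    (a : M) (ha : IsLocalDelta a a) : QuasiCentral a := by
  classical
  have key : ∀ x ∈ Irr M, ∃ c ∈ Irr M, x * a = a * c := by
    intro x hx
    obtain ⟨r, hr⟩ := ha.1 x
    obtain ⟨s, hs⟩ := hr.2.1
    obtain ⟨t, ht⟩ := ha.2.1 x r hr
    have h1 : x * a = a * (s * t) := by
      calc x * a = x * (r * t) := by rw [← ht]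
        _ = (x * r) * t := by rw [mul_assoc]
        _ = (a * s) * t := by rw [hs]
        _ = a * (s * t) := by rw [mul_assoc]
    refine ⟨s * t, ?_, h1⟩
    have h2 : Stmt14Aux.len hM x + Stmt14Aux.len hM a
        = Stmt14Aux.len hM a + Stmt14Aux.len hM (s * t) := by
      rw [← Stmt14Aux.len_mul, ← Stmt14Aux.len_mul, h1]
    have h3 : Stmt14Aux.len hM x = 1 := Stmt14Aux.len_irr hM hx
    exact Stmt14Aux.irr_of_len_one hM (by omega)
  set f : M → M := fun x => if h : ∃ c ∈ Irr M, x * a = a * c then h.choose else 1 with hf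
  have hfspec : ∀ x ∈ Irr M, f x ∈ Irr M ∧ x * a = a * f x := by
    intro x hx
    have h := key x hx
    rw [hf]
    simp only [dif_pos h]
    exact ⟨h.choose_spec.1, h.choose_spec.2⟩
  have hmaps : Set.MapsTo f (Irr M) (Irr M) := fun x hx => (hfspec x hx).1
  have hinj : Set.InjOn f (Irr M) := by
    intro x hx y hy hxy
    have h1 := (hfspec x hx).2
    have h2 := (hfspec y hy).2
    have h3 : x * a = y * a := by rw [h1, h2, hxy]
    exact hM.mul_right_cancel a x y h3
  have hsurj : Set.SurjOn f (Irr M) (Irr M) :=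
    ((hM.irr_finite.injOn_iff_bijOn_of_mapsTo hmaps).mp hinj).2.2
  unfold QuasiCentral
  ext m
  simp only [Set.mem_image]
  constructor
  · rintro ⟨x, hx, rfl⟩
    obtain ⟨y, hy, hyx⟩ := hsurj hx
    exact ⟨y, hy, by rw [(hfspec y hy).2, hyx]⟩
  · rintro ⟨x, hx, rfl⟩
    exact ⟨f x, hmaps hx, ((hfspec x hx).2).symm⟩
end

section
/- Let M be a divisibility monoid with set Σ of irreducible elements. Then the set {Δ_R(x) : x ∈ Σ, Δ_R(x) exists} generates the quasi-center of M. -/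
namespace Stmt16Aux

variable {M : Type*} [Monoid M]

theorem ldvd_refl (a : M) : LDvd a a := ⟨1, (mul_one a).symm⟩

theorem one_ldvd (a : M) : LDvd 1 a := ⟨a, (one_mul a).symm⟩

theorem ldvd_mul (a b : M) : LDvd a (a * b) := ⟨b, rfl⟩

theorem ldvd_trans {a b c : M} (h1 : LDvd a b) (h2 : LDvd b c) : LDvd a c := by
  obtain ⟨d, rfl⟩ := h1; obtain ⟨e, rfl⟩ := h2; exact ⟨d * e, mul_assoc a d e⟩

theorem ldvd_mul_left {a b c : M} (h : LDvd b c) : LDvd (a * b) (a * c) := by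
  obtain ⟨d, rfl⟩ := h; exact ⟨d, (mul_assoc a b d).symm⟩

variable (hM : IsDivisibilityMonoid M)
include hM

theorem ldvd_cancel {a b c : M} (h : LDvd (a * b) (a * c)) : LDvd b c := by
  obtain ⟨d, hd⟩ := h
  exact ⟨d, hM.mul_left_cancel a c (b * d) (by rw [hd, mul_assoc])⟩

/-- `M` is conical. -/
theorem conical {u v : M} (h : u * v = 1) : u = 1 ∧ v = 1 := by
  have hvu : v * u = 1 := by
    apply hM.mul_left_cancel u
    rw [← mul_assoc, h, one_mul, mul_one]
  have hu1 : LDvd u 1 := ⟨v, h.symm⟩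
  have hjoin : IsJoinIn (1 : M) 1 1 u := by
    refine ⟨hu1, ⟨u, (one_mul u).symm⟩, ⟨u, (one_mul u).symm⟩, ?_⟩
    intro m hm _ _
    obtain ⟨d, hd⟩ := hm
    exact ⟨v * m, by rw [← mul_assoc, h, one_mul]⟩
  have hgcd : IsLeftGcd (1 : M) u u := ⟨hu1, ldvd_refl u, fun d _ hdu => hdu⟩
  have hgcd1 : IsLeftGcd (1 : M) 1 1 := ⟨ldvd_refl 1, ldvd_refl 1, fun d hd _ => hd⟩
  have hjoin1 : IsJoinIn (1 : M) 1 1 1 :=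
    ⟨ldvd_refl 1, ldvd_refl 1, ldvd_refl 1, fun m hm _ _ => one_ldvd m⟩
  have := hM.distrib 1 1 1 1 (ldvd_refl 1) (ldvd_refl 1) (ldvd_refl 1)
    u u 1 1 1 hjoin hgcd hgcd1 hgcd1 hjoin1
  exact ⟨this, by rw [this, one_mul] at h; exact h⟩

theorem ldvd_one {a : M} (h : LDvd a 1) : a = 1 := by
  obtain ⟨d, hd⟩ := h; exact (conical hM hd.symm).1

theorem ldvd_antisymm {a b : M} (h1 : LDvd a b) (h2 : LDvd b a) : a = b := by
  obtain ⟨d, rfl⟩ := h1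
  obtain ⟨e, he⟩ := h2
  have : a * 1 = a * (d * e) := by rw [mul_one, ← mul_assoc, ← he]
  have hde : d * e = 1 := (hM.mul_left_cancel _ _ _ this).symm
  rw [(conical hM hde).1, mul_one]

theorem rlcm_unique {a b c₁ c₂ : M} (h1 : IsRightLcm a b c₁) (h2 : IsRightLcm a b c₂) :
    c₁ = c₂ :=
  ldvd_antisymm hM (h1.2.2 c₂ h2.1 h2.2.1) (h2.2.2 c₁ h1.1 h1.2.1)

theorem res_unique {b x r₁ r₂ : M} (h1 : IsRes b x r₁) (h2 : IsRes b x r₂) : r₁ = r₂ :=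
  hM.mul_left_cancel b r₁ r₂ (rlcm_unique hM h1 h2)

/-- a common right multiple yields a right lcm. -/
theorem lcm_of_cm {b x m : M} (hb : LDvd b m) (hx : LDvd x m) : ∃ j, IsRightLcm b x j := by
  obtain ⟨j, hja, hbj, hxj, hjmin⟩ := hM.exists_join m b x hb hx
  refine ⟨j, hbj, hxj, ?_⟩
  intro m' hbm' hxm'
  obtain ⟨g, hgm, hgm', hgmin⟩ := hM.exists_gcd m m'
  exact ldvd_trans (hjmin g hgm (hgmin b hb hbm') (hgmin x hx hxm')) hgm'

theorem res_of_cm {b x m : M} (hb : LDvd b m) (hx : LDvd x m) : ∃ r, IsRes b x r := by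
  obtain ⟨j, hj⟩ := lcm_of_cm hM hb hx
  obtain ⟨r, rfl⟩ := hj.1
  exact ⟨r, hj⟩

omit hM in
theorem res_one_left {x : M} : IsRes 1 x x := by
  refine ⟨⟨x, rfl⟩, ⟨1, by rw [one_mul, mul_one]⟩, ?_⟩
  intro m _ hxm
  rw [one_mul]; exact hxm

omit hM in
/-- irreducibles have only trivial left divisors -/
theorem ldvd_irr {x d : M} (hx : x ∈ Irr M) (h : LDvd d x) : d = 1 ∨ d = x := by
  obtain ⟨e, he⟩ := h
  rcases hx.2 d e he with h1 | h1
  · exact Or.inl h1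
  · right; rw [he, h1, mul_one]

/-- finite joins inside `↓ a` -/
theorem join_set (a : M) (s : Set M) (hfin : s.Finite) (hsub : ∀ t ∈ s, LDvd t a) :
    ∃ j, LDvd j a ∧ (∀ t ∈ s, LDvd t j) ∧
      ∀ m, LDvd m a → (∀ t ∈ s, LDvd t m) → LDvd j m := by
  revert hsub
  refine Set.Finite.induction_on
    (motive := fun s _ => (∀ t ∈ s, LDvd t a) →
      ∃ j, LDvd j a ∧ (∀ t ∈ s, LDvd t j) ∧
        ∀ m, LDvd m a → (∀ t ∈ s, LDvd t m) → LDvd j m) s hfin ?_ ?_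
  · exact fun _ => ⟨1, one_ldvd a, fun t ht => ht.elim, fun m hm _ => one_ldvd m⟩
  · intro t s hts hsfin ih hsub
    obtain ⟨j, hja, hub, hmin⟩ := ih (fun u hu => hsub u (Set.mem_insert_of_mem t hu))
    obtain ⟨j₂, hj₂a, hjj₂, htj₂, hj₂min⟩ :=
      hM.exists_join a j t hja (hsub t (Set.mem_insert t s))
    refine ⟨j₂, hj₂a, ?_, ?_⟩
    · intro u hu
      rcases Set.mem_insert_iff.mp hu with rfl | hu
      · exact htj₂
      · exact ldvd_trans (hub u hu) hjj₂
    · intro m hma hm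
      exact hj₂min m hma (hmin m hma fun u hu => hm u (Set.mem_insert_of_mem t hu))
        (hm t (Set.mem_insert t s))

theorem factor_exists (a : M) : ∃ l : List M, (∀ x ∈ l, x ∈ Irr M) ∧ l.prod = a := by
  have h := hM.irr_gen a
  induction h using Submonoid.closure_induction with
  | mem x hx => exact ⟨[x], fun y hy => by rwa [List.mem_singleton.mp hy], List.prod_singleton⟩
  | one => exact ⟨[], fun y hy => absurd hy List.not_mem_nil, List.prod_nil⟩
  | mul x y hx hy ihx ihy =>
    obtain ⟨l₁, h₁, rfl⟩ := ihx
    obtain ⟨l₂, h₂, rfl⟩ := ihy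
    exact ⟨l₁ ++ l₂, fun z hz => (List.mem_append.mp hz).elim (h₁ z) (h₂ z),
      List.prod_append⟩

/-- the number of left divisors of `a`. -/
noncomputable def mu (a : M) : ℕ := (hM.divisors_finite a).toFinset.card

theorem mu_pos (a : M) : 0 < mu hM a :=
  Finset.card_pos.mpr ⟨1, (Set.Finite.mem_toFinset _).mpr (one_ldvd a)⟩

theorem mu_lt {a x b : M} (h : a = x * b) (hx : x ≠ 1) : mu hM b < mu hM a := by
  classical
  have hinj : Function.Injective (fun d : M => x * d) :=
    fun u v huv => hM.mul_left_cancel x u v huv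
  have hsub : ((hM.divisors_finite b).toFinset.image (fun d => x * d)) ⊆
      (hM.divisors_finite a).toFinset := by
    intro e he
    obtain ⟨d, hd, rfl⟩ := Finset.mem_image.mp he
    obtain ⟨f, hf⟩ := (Set.Finite.mem_toFinset _).mp hd
    exact (Set.Finite.mem_toFinset _).mpr ⟨f, by rw [h, hf, mul_assoc]⟩
  have h1mem : (1 : M) ∈ (hM.divisors_finite a).toFinset :=
    (Set.Finite.mem_toFinset _).mpr (one_ldvd a)
  have h1not : (1 : M) ∉ (hM.divisors_finite b).toFinset.image (fun d => x * d) := by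
    intro hmem
    obtain ⟨d, _, hd⟩ := Finset.mem_image.mp hmem
    exact hx (conical hM hd).1
  calc mu hM b = ((hM.divisors_finite b).toFinset.image (fun d => x * d)).card :=
        (Finset.card_image_of_injective _ hinj).symm
    _ < mu hM a := Finset.card_lt_card
        ((Finset.ssubset_iff_of_subset hsub).mpr ⟨1, h1mem, h1not⟩)

omit hM in
theorem join_swap {a x y j : M} (h : IsJoinIn a x y j) : IsJoinIn a y x j :=
  ⟨h.1, h.2.2.1, h.2.1, fun m hm hy hx => h.2.2.2 m hm hx hy⟩

/-- cover step : if `x ≠ y` are irreducible and `j` is their join in `↓ a`,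
then `j = x * y'` with `y'` irreducible. -/
theorem cover {a x y j : M} (hx : x ∈ Irr M) (hy : y ∈ Irr M) (hxy : x ≠ y)
    (hj : IsJoinIn a x y j) : ∃ y', y' ∈ Irr M ∧ j = x * y' := by
  obtain ⟨hja, hxj, hyj, hjmin⟩ := hj
  obtain ⟨y', rfl⟩ := hxj
  refine ⟨y', ⟨?_, ?_⟩, rfl⟩
  · -- y' ≠ 1
    rintro rfl
    rw [mul_one] at hyj
    rcases ldvd_irr hx hyj with h1 | h1
    · exact hy.1 h1
    · exact hxy h1.symm
  · -- y' has only trivial factorisations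
    intro u v huv
    by_contra hcon
    push_neg at hcon
    obtain ⟨hu, hv⟩ := hcon
    set m := x * u with hm
    have hmj : LDvd m (x * y') := ⟨v, by rw [huv, hm, mul_assoc]⟩
    have hma : LDvd m a := ldvd_trans hmj hja
    have hmx : LDvd x m := ⟨u, rfl⟩
    obtain ⟨g₀, hg₀m, hg₀y, hg₀min⟩ := hM.exists_gcd m y
    have hg₀1 : g₀ = 1 := by
      rcases ldvd_irr hy hg₀y with h1 | h1
      · exact h1
      · exfalso
        rw [h1] at hg₀m
        have hjm : LDvd (x * y') m := hjmin m hma hmx hg₀m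
        have := ldvd_antisymm hM hjm hmj
        rw [hm, huv, ← mul_assoc] at this
        have := hM.mul_left_cancel (x * u) v 1 (by rw [this, mul_one])
        exact hv this
    have hgcd_mj : IsLeftGcd m (x * y') m := ⟨ldvd_refl m, hmj, fun d hd _ => hd⟩
    have hgcd_mx : IsLeftGcd m x x := ⟨hmx, ldvd_refl x, fun d _ hdx => hdx⟩
    have hgcd_my : IsLeftGcd m y 1 := hg₀1 ▸ ⟨hg₀m, hg₀y, hg₀min⟩
    have hjoin' : IsJoinIn a x 1 x :=
      ⟨ldvd_trans hmx hma, ldvd_refl x, one_ldvd x, fun m' _ hxm' _ => hxm'⟩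
    have hmeqx : m = x := hM.distrib a m x y hma (ldvd_trans hmx hma)
      (ldvd_trans hyj hja) (x * y') m x 1 x
      ⟨hja, ⟨y', rfl⟩, hyj, hjmin⟩ hgcd_mj hgcd_mx hgcd_my hjoin'
    exact hu (hM.mul_left_cancel x u 1 (by rw [← hm, hmeqx, mul_one]))

theorem exchange {a x y : M} (hx : x ∈ Irr M) (hy : y ∈ Irr M) (hxy : x ≠ y)
    (hxa : LDvd x a) (hya : LDvd y a) :
    ∃ y' x' e, y' ∈ Irr M ∧ x' ∈ Irr M ∧ x * (y' * e) = a ∧ y * (x' * e) = a := by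
  obtain ⟨j, hj⟩ := hM.exists_join a x y hxa hya
  obtain ⟨y', hy', hjy'⟩ := cover hM hx hy hxy hj
  obtain ⟨x', hx', hjx'⟩ := cover hM hy hx (Ne.symm hxy) (join_swap hj)
  obtain ⟨e, he⟩ := hj.1
  exact ⟨y', x', e, hy', hx',
    by rw [← mul_assoc, ← hjy', ← he],
    by rw [← mul_assoc, ← hjx', ← he]⟩

theorem grading : ∀ n (a : M) (l₁ l₂ : List M), mu hM a ≤ n →
    (∀ x ∈ l₁, x ∈ Irr M) → (∀ x ∈ l₂, x ∈ Irr M) →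
    l₁.prod = a → l₂.prod = a → l₁.length = l₂.length := by
  intro n
  induction n with
  | zero => exact fun a l₁ l₂ hmu _ _ _ _ => absurd (lt_of_lt_of_le (mu_pos hM a) hmu) (lt_irrefl 0)
  | succ n ih =>
    intro a l₁ l₂ hmu h1 h2 hp1 hp2
    match l₁, l₂ with
    | [], [] => rfl
    | [], y :: t₂ =>
      exfalso
      rw [List.prod_nil] at hp1
      rw [List.prod_cons, ← hp1] at hp2
      exact (h2 y (List.mem_cons_self)).1 (conical hM hp2).1
    | x :: t₁, [] =>
      exfalso
      rw [List.prod_nil] at hp2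
      rw [List.prod_cons, ← hp2] at hp1
      exact (h1 x (List.mem_cons_self)).1 (conical hM hp1).1
    | x :: t₁, y :: t₂ =>
      rw [List.prod_cons] at hp1 hp2
      have hxI : x ∈ Irr M := h1 x (List.mem_cons_self)
      have hyI : y ∈ Irr M := h2 y (List.mem_cons_self)
      have hmut₁ : mu hM t₁.prod ≤ n :=
        Nat.lt_succ_iff.mp (lt_of_lt_of_le (mu_lt hM hp1.symm hxI.1) hmu)
      have hmut₂ : mu hM t₂.prod ≤ n :=
        Nat.lt_succ_iff.mp (lt_of_lt_of_le (mu_lt hM hp2.symm hyI.1) hmu)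
      by_cases hxy : x = y
      · subst hxy
        have : t₁.prod = t₂.prod := hM.mul_left_cancel x _ _ (by rw [hp1, hp2])
        have := ih t₁.prod t₁ t₂ hmut₁ (fun z hz => h1 z (List.mem_cons_of_mem x hz))
          (fun z hz => h2 z (List.mem_cons_of_mem _ hz)) rfl this.symm
        simp [this]
      · obtain ⟨y', x', e, hy', hx', hey, hex⟩ := exchange hM hxI hyI hxy
          ⟨t₁.prod, hp1.symm⟩ ⟨t₂.prod, hp2.symm⟩
        obtain ⟨le, hle, rfl⟩ := factor_exists hM e
        have ht₁ : t₁.prod = (y' :: le).prod := by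
          rw [List.prod_cons]
          exact hM.mul_left_cancel x _ _ (by rw [hp1, hey])
        have ht₂ : t₂.prod = (x' :: le).prod := by
          rw [List.prod_cons]
          exact hM.mul_left_cancel y _ _ (by rw [hp2, hex])
        have hl1 := ih t₁.prod t₁ (y' :: le) hmut₁
          (fun z hz => h1 z (List.mem_cons_of_mem x hz))
          (fun z hz => (List.mem_cons.mp hz).elim (fun h => h ▸ hy') (hle z))
          rfl ht₁.symm
        have hl2 := ih t₂.prod t₂ (x' :: le) hmut₂
          (fun z hz => h2 z (List.mem_cons_of_mem y hz))
          (fun z hz => (List.mem_cons.mp hz).elim (fun h => h ▸ hx') (hle z))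
          rfl ht₂.symm
        simp only [List.length_cons, hl1, hl2]

/-- the length of `a` : the common length of all factorisations of `a` into irreducibles. -/
noncomputable def len (a : M) : ℕ := (factor_exists hM a).choose.length

theorem len_spec {a : M} {l : List M} (hl : ∀ x ∈ l, x ∈ Irr M) (hp : l.prod = a) :
    l.length = len hM a :=
  grading hM (mu hM a) a l (factor_exists hM a).choose le_rfl hl
    (factor_exists hM a).choose_spec.1 hp (factor_exists hM a).choose_spec.2

theorem len_mul (a b : M) : len hM (a * b) = len hM a + len hM b := by
  obtain ⟨la, hla, hpa⟩ := factor_exists hM a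
  obtain ⟨lb, hlb, hpb⟩ := factor_exists hM b
  have h3 := len_spec hM (l := la ++ lb)
    (fun z hz => (List.mem_append.mp hz).elim (hla z) (hlb z))
    (by rw [List.prod_append, hpa, hpb])
  rw [← h3, List.length_append, len_spec hM hla hpa, len_spec hM hlb hpb]

theorem len_irr {x : M} (hx : x ∈ Irr M) : len hM x = 1 :=
  (len_spec hM (l := [x]) (fun y hy => by rwa [List.mem_singleton.mp hy])
    List.prod_singleton).symm

theorem irr_of_len_one {t : M} (h : len hM t = 1) : t ∈ Irr M := by
  obtain ⟨l, hl, hp⟩ := factor_exists hM t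
  have hlen : l.length = 1 := (len_spec hM hl hp).trans h
  obtain ⟨u, rfl⟩ := List.length_eq_one_iff.mp hlen
  rw [List.prod_singleton] at hp
  exact hp ▸ hl u (List.mem_singleton_self u)

/-- composition of residues : `(b c) \ x = c \ (b \ x)`. -/
theorem res_comp {b c x r r₂ : M} (h1 : IsRes b x r) (h2 : IsRes (b * c) x r₂) :
    IsRes c r r₂ := by
  refine ⟨⟨r₂, rfl⟩, ?_, ?_⟩
  · -- r left-divides c * r₂
    have hx : LDvd x (b * (c * r₂)) := by
      rw [← mul_assoc]; exact h2.2.1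
    have hbr : LDvd (b * r) (b * (c * r₂)) := h1.2.2 _ (ldvd_mul b _) hx
    exact ldvd_cancel hM hbr
  · intro m hcm hrm
    have hbc : LDvd (b * c) (b * m) := ldvd_mul_left hcm
    have hx : LDvd x (b * m) := ldvd_trans h1.2.1 (ldvd_mul_left hrm)
    have := h2.2.2 (b * m) hbc hx
    rw [mul_assoc] at this
    exact ldvd_cancel hM this

theorem qc_of_forall_left {a : M} (h : ∀ y ∈ Irr M, ∃ z ∈ Irr M, y * a = a * z) :
    QuasiCentral a := by
  have hinjl : Function.Injective (fun x : M => a * x) :=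
    fun u v huv => hM.mul_left_cancel a u v huv
  have hinjr : Function.Injective (fun x : M => x * a) :=
    fun u v huv => hM.mul_right_cancel a u v huv
  have hBA : (fun x : M => x * a) '' Irr M ⊆ (fun x : M => a * x) '' Irr M := by
    rintro _ ⟨y, hy, rfl⟩
    obtain ⟨z, hz, hez⟩ := h y hy
    exact ⟨z, hz, hez.symm⟩
  have hcard : ((fun x : M => a * x) '' Irr M).ncard ≤ ((fun x : M => x * a) '' Irr M).ncard := by
    rw [Set.ncard_image_of_injective _ hinjl, Set.ncard_image_of_injective _ hinjr]
  exact (Set.eq_of_subset_of_ncard_le hBA hcard (hM.irr_finite.image _)).symm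

theorem qc_of_forall_right {a : M} (h : ∀ y ∈ Irr M, ∃ z ∈ Irr M, a * y = z * a) :
    QuasiCentral a := by
  have hinjl : Function.Injective (fun x : M => a * x) :=
    fun u v huv => hM.mul_left_cancel a u v huv
  have hinjr : Function.Injective (fun x : M => x * a) :=
    fun u v huv => hM.mul_right_cancel a u v huv
  have hAB : (fun x : M => a * x) '' Irr M ⊆ (fun x : M => x * a) '' Irr M := by
    rintro _ ⟨y, hy, rfl⟩
    obtain ⟨z, hz, hez⟩ := h y hy
    exact ⟨z, hz, hez.symm⟩
  have hcard : ((fun x : M => x * a) '' Irr M).ncard ≤ ((fun x : M => a * x) '' Irr M).ncard := by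
    rw [Set.ncard_image_of_injective _ hinjl, Set.ncard_image_of_injective _ hinjr]
  exact Set.eq_of_subset_of_ncard_le hAB hcard (hM.irr_finite.image _)

omit hM in
theorem qc_right {a y : M} (hqc : QuasiCentral a) (hy : y ∈ Irr M) :
    ∃ z ∈ Irr M, y * a = a * z := by
  have : y * a ∈ (fun x : M => x * a) '' Irr M := ⟨y, hy, rfl⟩
  rw [← hqc] at this
  obtain ⟨z, hz, hez⟩ := this
  exact ⟨z, hz, hez.symm⟩

omit hM in
theorem qc_left {a y : M} (hqc : QuasiCentral a) (hy : y ∈ Irr M) :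
    ∃ z ∈ Irr M, a * y = z * a := by
  have : a * y ∈ (fun x : M => a * x) '' Irr M := ⟨y, hy, rfl⟩
  rw [hqc] at this
  obtain ⟨z, hz, hez⟩ := this
  exact ⟨z, hz, hez.symm⟩

/-- every element commutes with a quasi-central element up to a twist. -/
theorem qc_comm_all {a : M} (hqc : QuasiCentral a) (b : M) : ∃ b', b * a = a * b' := by
  have h := hM.irr_gen b
  induction h using Submonoid.closure_induction with
  | mem x hx => obtain ⟨z, _, hz⟩ := qc_right hqc hx; exact ⟨z, hz⟩
  | one => exact ⟨1, by rw [one_mul, mul_one]⟩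
  | mul u v hu hv ihu ihv =>
    obtain ⟨u', hu'⟩ := ihu
    obtain ⟨v', hv'⟩ := ihv
    exact ⟨u' * v', by rw [mul_assoc, hv', ← mul_assoc, hu', mul_assoc]⟩

/-- Lemma A : every local delta is quasi-central. -/
theorem qc_of_delta {x D : M} (hD : IsLocalDelta x D) : QuasiCentral D := by
  obtain ⟨h1, h2, h3⟩ := hD
  set S : Set M := {r | ∃ b, IsRes b x r} with hS
  have hSdvd : ∀ r ∈ S, LDvd r D := fun r ⟨b, hb⟩ => h2 b r hb
  have hSfin : S.Finite := (hM.divisors_finite D).subset hSdvd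
  -- closure of S under residues
  have hSclos : ∀ s ∈ S, ∀ c : M, ∃ r₂, IsRes c s r₂ ∧ r₂ ∈ S := by
    rintro s ⟨b, hb⟩ c
    obtain ⟨r₂, hr₂⟩ := h1 (b * c)
    exact ⟨r₂, res_comp hM hb hr₂, ⟨b * c, hr₂⟩⟩
  -- common multiples of c with all of S
  have hcm : ∀ c : M, ∃ m, LDvd c m ∧ ∀ s ∈ S, LDvd s m := by
    intro c
    have : ∀ F : Set M, F ⊆ S → F.Finite → ∃ m, LDvd c m ∧ ∀ s ∈ F, LDvd s m := by
      intro F hFS hFfin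
      revert hFS
      refine Set.Finite.induction_on
        (motive := fun F _ => F ⊆ S → ∃ m, LDvd c m ∧ ∀ s ∈ F, LDvd s m) F hFfin ?_ ?_
      · exact fun _ => ⟨c, ldvd_refl c, fun s hs => hs.elim⟩
      · intro t F htF hFfin ih hins
        obtain ⟨m, hcm, hub⟩ := ih (fun u hu => hins (Set.mem_insert_of_mem t hu))
        obtain ⟨r₂, hr₂, _⟩ := hSclos t (hins (Set.mem_insert t F)) m
        refine ⟨m * r₂, ldvd_trans hcm (ldvd_mul m r₂), ?_⟩
        intro s hs
        rcases Set.mem_insert_iff.mp hs with rfl | hs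
        · exact hr₂.2.1
        · exact ldvd_trans (hub s hs) (ldvd_mul m r₂)
    exact this S (fun _ h => h) hSfin
  -- key : the residue of D along any c exists and left-divides D
  have hres : ∀ c : M, ∃ w, IsRes c D w ∧ LDvd w D := by
    intro c
    obtain ⟨m, hcmm, hub⟩ := hcm c
    have hDm : LDvd D m := h3 m (fun b r hbr => hub r ⟨b, hbr⟩)
    obtain ⟨w, hw⟩ := res_of_cm hM hcmm hDm
    -- the set of residues of elements of S along c
    set T : Set M := {r₂ | ∃ s ∈ S, IsRes c s r₂} with hT
    have hTS : T ⊆ S := by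
      rintro r₂ ⟨s, hsS, hres⟩
      obtain ⟨r₂', hr₂', hr₂'S⟩ := hSclos s hsS c
      rwa [res_unique hM hres hr₂']
    obtain ⟨D'', hD''D, hTub, _⟩ := join_set hM D T (hSfin.subset hTS)
      (fun t ht => hSdvd t (hTS ht))
    have hDcD'' : LDvd D (c * D'') := by
      apply h3
      intro b r hbr
      obtain ⟨r₂, hr₂, _⟩ := hSclos r ⟨b, hbr⟩ c
      exact ldvd_trans hr₂.2.1 (ldvd_mul_left (hTub r₂ ⟨r, ⟨b, hbr⟩, hr₂⟩))
    have hwD'' : LDvd (c * w) (c * D'') := hw.2.2 _ (ldvd_mul c D'') hDcD''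
    exact ⟨w, hw, ldvd_trans (ldvd_cancel hM hwD'') hD''D⟩
  -- conclude quasi-centrality
  apply qc_of_forall_left hM
  intro y hy
  obtain ⟨w, hw, hwD⟩ := hres y
  have hDyD : LDvd D (y * D) := ldvd_trans hw.2.1 (ldvd_mul_left hwD)
  obtain ⟨t, ht⟩ := hDyD
  have hlen : len hM t = 1 := by
    have := len_mul hM y D
    rw [ht, len_mul hM, len_irr hM hy] at this
    omega
  exact ⟨t, irr_of_len_one hM hlen, ht⟩

omit hM in
theorem qc_one : QuasiCentral (1 : M) := by
  unfold QuasiCentral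
  simp only [one_mul, mul_one]

theorem qc_mul {a b : M} (ha : QuasiCentral a) (hb : QuasiCentral b) :
    QuasiCentral (a * b) := by
  apply qc_of_forall_left hM
  intro y hy
  obtain ⟨z₁, hz₁, he₁⟩ := qc_right ha hy
  obtain ⟨z₂, hz₂, he₂⟩ := qc_right hb hz₁
  exact ⟨z₂, hz₂, by rw [← mul_assoc, he₁, mul_assoc, he₂, ← mul_assoc]⟩

/-- the submonoid of quasi-central elements. -/
noncomputable def qcSubmonoid : Submonoid M where
  carrier := {a : M | QuasiCentral a}
  one_mem' := qc_one
  mul_mem' := fun ha hb => qc_mul hM ha hb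

/-- The hard direction : every quasi-central element is a product of local deltas
of irreducible elements. -/
theorem main_sub : ∀ n (a : M), mu hM a ≤ n → QuasiCentral a →
    a ∈ Submonoid.closure {d : M | ∃ x ∈ Irr M, IsLocalDelta x d} := by
  intro n
  induction n with
  | zero => exact fun a hmu _ => absurd (lt_of_lt_of_le (mu_pos hM a) hmu) (lt_irrefl 0)
  | succ n ih =>
    intro a hmu hqc
    by_cases ha : a = 1
    · rw [ha]; exact one_mem _
    -- an irreducible left divisor of a
    obtain ⟨l, hl, hp⟩ := factor_exists hM a
    obtain ⟨x, t, rfl⟩ : ∃ x t, l = x :: t := by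
      cases l with
      | nil => exact absurd (hp.symm.trans List.prod_nil) ha
      | cons x t => exact ⟨x, t, rfl⟩
    have hx : x ∈ Irr M := hl x (List.mem_cons_self)
    rw [List.prod_cons] at hp
    have hxa : LDvd x a := ⟨t.prod, hp.symm⟩
    -- common multiples with a
    have haba : ∀ b : M, LDvd a (b * a) := by
      intro b
      obtain ⟨b', hb'⟩ := qc_comm_all hM hqc b
      exact ⟨b', hb'⟩
    have hxba : ∀ b : M, LDvd x (b * a) := fun b => ldvd_trans hxa (haba b)
    -- residues of x exist
    have hres : ∀ b : M, ∃ r, IsRes b x r := fun b => res_of_cm hM (ldvd_mul b a) (hxba b)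
    set S : Set M := {r | ∃ b, IsRes b x r} with hS
    have hSdvd : ∀ r ∈ S, LDvd r a := by
      rintro r ⟨b, hb⟩
      exact ldvd_cancel hM (hb.2.2 (b * a) (ldvd_mul b a) (hxba b))
    -- the local delta of x
    obtain ⟨D, hDa, hub, hmin⟩ := join_set hM a S ((hM.divisors_finite a).subset hSdvd) hSdvd
    have hld : IsLocalDelta x D := by
      refine ⟨hres, fun b r hbr => hub r ⟨b, hbr⟩, ?_⟩
      intro m hm
      obtain ⟨g, hga, hgm, hgmin⟩ := hM.exists_gcd a m
      refine ldvd_trans (hmin g hga ?_) hgm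
      rintro r ⟨b, hbr⟩
      exact hgmin r (hSdvd r ⟨b, hbr⟩) (hm b r hbr)
    have hxD : LDvd x D := hub x ⟨1, res_one_left⟩
    have hD1 : D ≠ 1 := by
      rintro rfl
      exact hx.1 (ldvd_one hM hxD)
    have hqcD : QuasiCentral D := qc_of_delta hM hld
    -- the quotient
    obtain ⟨a', ha'⟩ := hDa
    have hqca' : QuasiCentral a' := by
      apply qc_of_forall_right hM
      intro y hy
      obtain ⟨y₂, hy₂, he₂⟩ := qc_left hqc hy
      obtain ⟨y₃, hy₃, he₃⟩ := qc_right hqcD hy₂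
      refine ⟨y₃, hy₃, hM.mul_left_cancel D _ _ ?_⟩
      rw [← mul_assoc, ← ha', he₂, ha', ← mul_assoc, he₃, mul_assoc]
    have hmu' : mu hM a' ≤ n := Nat.lt_succ_iff.mp (lt_of_lt_of_le (mu_lt hM ha' hD1) hmu)
    have hmem : D ∈ Submonoid.closure {d : M | ∃ x ∈ Irr M, IsLocalDelta x d} :=
      Submonoid.subset_closure ⟨x, hx, hld⟩
    rw [ha']
    exact mul_mem hmem (ih a' hmu' hqca')

end Stmt16Aux

theorem stmt16 {M : Type*} [Monoid M] (hM : IsDivisibilityMonoid M) :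
    {a : M | QuasiCentral a} =
      ↑(Submonoid.closure {d : M | ∃ x ∈ Irr M, IsLocalDelta x d}) := by
  apply Set.eq_of_subset_of_subset
  · intro a ha
    exact Stmt16Aux.main_sub hM (Stmt16Aux.mu hM a) a le_rfl ha
  · intro a ha
    have h := Submonoid.closure_le (S := Stmt16Aux.qcSubmonoid hM)
      (s := {d : M | ∃ x ∈ Irr M, IsLocalDelta x d})
    exact h.mpr (fun d ⟨x, _, hld⟩ => Stmt16Aux.qc_of_delta hM hld) ha
end
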